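/- A lattice L can be embedded into Co(P) for some poset P of length at most 2 if and only if L satisfies the identities (L2), (U), and (B). -/

import Mathlib

/-! Common definitions: lattices of order-convex subsets of a poset,
length of a poset, the identities (S), (U), (B), (L2), (H_n), (H_{m,n}),
join-irreducibility, the join-dependency relation, join-seeds,
the posets P_{I,J}, tree-like posets, D-closed sets,
and complete lattice congruences. -/

open Set

/-- The lattice `Co P` of all order-convex subsets of a poset `P`. -/
def Co (P : Type*) [PartialOrder P] : Type _ := {s : Set P // s.OrdConnected}

namespace Co

variable {P : Type*} [PartialOrder P]

instance : PartialOrder (Co P) := Subtype.partialOrder _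

instance : InfSet (Co P) :=
  ⟨fun S => ⟨⋂ s ∈ S, s.1, Set.ordConnected_biInter fun s _ => s.2⟩⟩

noncomputable instance : CompleteLattice (Co P) :=
  completeLatticeOfInf (Co P) (by
    intro S
    constructor
    · intro t ht
      exact Set.biInter_subset_of_mem (t := fun s => s.1) ht
    · intro b hb
      exact Set.subset_iInter₂ fun t ht => hb ht)

/-- The order-convex subset of `P` with underlying set `X`. -/
def mk' (X : Set P) (hX : X.OrdConnected) : Co P := ⟨X, hX⟩

/-- The singleton `{p}`, as an order-convex set. -/
def sngl (p : P) : Co P := ⟨{p}, Set.ordConnected_singleton⟩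

/-- The empty order-convex set. -/
def emp : Co P := ⟨∅, Set.ordConnected_empty⟩

end Co

/-- `lengthLE P n` states that the poset `P` has length at most `n`, that is,
every finite chain of `P` has at most `n + 1` elements. -/
def lengthLE (P : Type*) [PartialOrder P] (n : ℕ) : Prop :=
  ∀ C : Finset P, IsChain (· ≤ ·) (C : Set P) → C.card ≤ n + 1

section Identities

/-- The Stirlitz identity (S). -/
def IdS (L : Type*) [Lattice L] : Prop :=
  ∀ a b b₀ b₁ c : L,
    a ⊓ ((b ⊓ (b₀ ⊔ b₁)) ⊔ c) =
      (a ⊓ (b ⊓ (b₀ ⊔ b₁)))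
      ⊔ (a ⊓ (b₀ ⊔ c) ⊓ ((b ⊓ (b₀ ⊔ b₁) ⊓ (a ⊔ b₀)) ⊔ c))
      ⊔ (a ⊓ (b₁ ⊔ c) ⊓ ((b ⊓ (b₀ ⊔ b₁) ⊓ (a ⊔ b₁)) ⊔ c))

/-- The Udav identity (U). -/
def IdU (L : Type*) [Lattice L] : Prop :=
  ∀ x x₀ x₁ x₂ : L,
    x ⊓ (x₀ ⊔ x₁) ⊓ (x₁ ⊔ x₂) ⊓ (x₀ ⊔ x₂) =
      (x ⊓ x₀ ⊓ (x₁ ⊔ x₂)) ⊔ (x ⊓ x₁ ⊓ (x₀ ⊔ x₂)) ⊔ (x ⊓ x₂ ⊓ (x₀ ⊔ x₁))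

/-- The Bond identity (B). -/
def IdB (L : Type*) [Lattice L] : Prop :=
  ∀ x a₀ a₁ b₀ b₁ : L,
    x ⊓ (a₀ ⊔ a₁) ⊓ (b₀ ⊔ b₁) =
      (x ⊓ a₀ ⊓ (b₀ ⊔ b₁)) ⊔ (x ⊓ a₁ ⊓ (b₀ ⊔ b₁))
      ⊔ (x ⊓ b₀ ⊓ (a₀ ⊔ a₁)) ⊔ (x ⊓ b₁ ⊓ (a₀ ⊔ a₁))
      ⊔ (x ⊓ (a₀ ⊔ a₁) ⊓ (b₀ ⊔ b₁) ⊓ (a₀ ⊔ b₀) ⊓ (a₁ ⊔ b₁))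
      ⊔ (x ⊓ (a₀ ⊔ a₁) ⊓ (b₀ ⊔ b₁) ⊓ (a₀ ⊔ b₁) ⊓ (a₁ ⊔ b₀))

/-- The identity (L₂). -/
def IdL2 (L : Type*) [Lattice L] : Prop :=
  ∀ a b b' c c' : L,
    a ⊓ ((b ⊓ (c ⊔ c')) ⊔ b') =
      (a ⊓ b ⊓ (c ⊔ c')) ⊔ (a ⊓ ((b ⊓ c) ⊔ b')) ⊔ (a ⊓ ((b ⊓ c') ⊔ b'))

variable {L : Type*} [Lattice L]

/-- The lattice polynomial `U_{i,n}` (in the variables `x₀, …, xₙ, x'₁, …, x'ₙ`). -/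
def Upoly (x x' : ℕ → L) (n : ℕ) (i : ℕ) : L :=
  if h : n ≤ i then x n
  else x i ⊓ (Upoly x x' n (i + 1) ⊔ x' (i + 1))
  termination_by n - i
  decreasing_by omega

/-- The lattice polynomial `V_{i,j,n}`. -/
def Vpoly (x x' : ℕ → L) (n i : ℕ) (j : ℕ) : L :=
  if h : i ≤ j then (x i ⊓ Upoly x x' n (i + 1)) ⊔ (x i ⊓ x' (i + 1))
  else x j ⊓ (Vpoly x x' n i (j + 1) ⊔ x' (j + 1))
  termination_by i - j
  decreasing_by omega

/-- The lattice polynomial `W_{i,j,n}`. -/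
def Wpoly (x x' : ℕ → L) (n i : ℕ) (j : ℕ) : L :=
  if h : i ≤ j then
    x i ⊓ (x' (i + 1) ⊔ x' (i + 2)) ⊓ ((Upoly x x' n (i + 1) ⊓ (x i ⊔ x' (i + 2))) ⊔ x' (i + 1))
  else x j ⊓ (Wpoly x x' n i (j + 1) ⊔ x' (j + 1))
  termination_by i - j
  decreasing_by omega

/-- `bigJoin f k = f 0 ⊔ f 1 ⊔ ⋯ ⊔ f k`. -/
def bigJoin (f : ℕ → L) : ℕ → L
  | 0 => f 0
  | k + 1 => bigJoin f k ⊔ f (k + 1)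

end Identities

/-- The identity (Hₙ) : `Uₙ = ⋁_{0 ≤ i ≤ n-1} V_{i,n} ∨ ⋁_{0 ≤ i ≤ n-2} W_{i,n}`
(intended for `n ≥ 1`). -/
def IdH (n : ℕ) (L : Type*) [Lattice L] : Prop :=
  ∀ x x' : ℕ → L,
    Upoly x x' n 0 =
      bigJoin (fun i =>
        if i + 2 ≤ n then Vpoly x x' n i 0 ⊔ Wpoly x x' n i 0 else Vpoly x x' n i 0) (n - 1)

/-- The identity (H_{m,n}) (intended for `m, n ≥ 1`); the common base point is
`x 0 = y 0 = t`. -/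
def IdHmn (m n : ℕ) (L : Type*) [Lattice L] : Prop :=
  ∀ x x' y y' : ℕ → L, x 0 = y 0 →
    Upoly x x' m 0 ⊓ Upoly y y' n 0 =
      bigJoin (fun i =>
          if i + 2 ≤ m then
            (Vpoly x x' m i 0 ⊓ Upoly y y' n 0) ⊔ (Wpoly x x' m i 0 ⊓ Upoly y y' n 0)
          else Vpoly x x' m i 0 ⊓ Upoly y y' n 0) (m - 1)
      ⊔ bigJoin (fun j =>
          if j + 2 ≤ n then
            (Upoly x x' m 0 ⊓ Vpoly y y' n j 0) ⊔ (Upoly x x' m 0 ⊓ Wpoly y y' n j 0)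
          else Upoly x x' m 0 ⊓ Vpoly y y' n j 0) (n - 1)
      ⊔ (Upoly x x' m 0 ⊓ Upoly y y' n 0 ⊓ (x 1 ⊔ y' 1) ⊓ (x' 1 ⊔ y 1))

/-- `p` is join-irreducible: `p = x ⊔ y` implies `p = x` or `p = y`. -/
def JIrr {L : Type*} [Lattice L] (p : L) : Prop :=
  ∀ x y : L, p = x ⊔ y → p = x ∨ p = y

/-- The join-dependency relation `p D q`. -/
def DRel {L : Type*} [Lattice L] (p q : L) : Prop :=
  p ≠ q ∧ ∃ x : L, p ≤ q ⊔ x ∧ ∀ y < q, ¬ p ≤ y ⊔ x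

/-- A subset `S` of a lattice `L` is a join-seed. -/
def JoinSeed (L : Type*) [Lattice L] (S : Set L) : Prop :=
  (∀ p ∈ S, JIrr p) ∧
  (∀ a : L, ∃ T ⊆ S, IsLUB T a) ∧
  (∀ p ∈ S, ∀ a b : L, p ≤ a ⊔ b → ¬ p ≤ a → ¬ p ≤ b →
    ∃ x ∈ S, ∃ y ∈ S, x ≤ a ∧ y ≤ b ∧ p ≤ x ⊔ y ∧
      (∀ x' < x, ¬ p ≤ x' ⊔ y) ∧ (∀ y' < y, ¬ p ≤ x ⊔ y'))

/-- The poset `P_{I,J} = I ∪ {p} ∪ J`, where every element of `I` is below `p`,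
`p` is below every element of `J`, every element of `I` is below every element
of `J`, and there are no other strict comparabilities. -/
def PIJ (I J : Type*) : Type _ := I ⊕ (Unit ⊕ J)

namespace PIJ

variable {I J : Type*}

/-- The rank (height) of an element of `P_{I,J}`. -/
def rank (a : PIJ I J) : ℕ :=
  Sum.elim (fun _ => 0) (Sum.elim (fun _ => 1) fun _ => 2) a

instance : PartialOrder (PIJ I J) where
  le a b := a = b ∨ rank a < rank b
  le_refl a := Or.inl rfl
  le_trans a b c hab hbc := by
    rcases hab with rfl | h
    · exact hbc
    · rcases hbc with rfl | h'
      · exact Or.inr h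
      · exact Or.inr (h.trans h')
  le_antisymm a b hab hba := by
    rcases hab with rfl | h
    · rfl
    · rcases hba with rfl | h'
      · rfl
      · omega

end PIJ

/-- A poset is tree-like if it has no infinite bounded chain and between any two
points there is at most one repetition-free finite path with respect to the
covering relation. -/
def TreeLike (P : Type*) [PartialOrder P] : Prop :=
  (∀ C : Set P, IsChain (· ≤ ·) C → BddAbove C → BddBelow C → C.Finite) ∧
  (∀ a b : P, ∀ l₁ l₂ : List P,
    l₁.Nodup → l₁.head? = some a → l₁.getLast? = some b →
      l₁.Chain' (fun u v => u ⋖ v ∨ v ⋖ u) →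
    l₂.Nodup → l₂.head? = some a → l₂.getLast? = some b →
      l₂.Chain' (fun u v => u ⋖ v ∨ v ⋖ u) →
    l₁ = l₂)

/-- A subset `U` of a poset `P` is `D`-closed. -/
def DClosed {P : Type*} [PartialOrder P] (U : Set P) : Prop :=
  ∀ x p y : P, x < p → p < y → (x ∈ U ∨ y ∈ U) → p ∈ U

/-- A complete congruence of a complete lattice. -/
structure IsCompleteCongr {L : Type*} [CompleteLattice L] (θ : L → L → Prop) : Prop where
  refl : ∀ x, θ x x
  symm : ∀ {x y}, θ x y → θ y x
  trans : ∀ {x y z}, θ x y → θ y z → θ x z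
  sup : ∀ {a b c d}, θ a b → θ c d → θ (a ⊔ c) (b ⊔ d)
  inf : ∀ {a b c d}, θ a b → θ c d → θ (a ⊓ c) (b ⊓ d)
  cSup : ∀ (x : L) (Y : Set L), Y.Nonempty → (∀ y ∈ Y, θ x y) → θ x (sSup Y)
  cInf : ∀ (x : L) (Y : Set L), Y.Nonempty → (∀ y ∈ Y, θ x y) → θ x (sInf Y)

/-- The map `h_U : Co(P) → Co(P ∖ U)`, `X ↦ X ∖ U`. -/
def coRestrict {P : Type*} [PartialOrder P] (U : Set P) (X : Co P) :
    Co {p : P // p ∉ U} :=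
  ⟨Subtype.val ⁻¹' X.1, by
    constructor
    rintro a ha b hb z hz
    exact X.2.out ha hb ⟨hz.1, hz.2⟩⟩

/-- The lattice `D(P)` of all `D`-closed subsets of a poset `P`. -/
def DSub (P : Type*) [PartialOrder P] : Type _ := {U : Set P // DClosed U}

namespace DSub

variable {P : Type*} [PartialOrder P]

instance : PartialOrder (DSub P) := Subtype.partialOrder _

instance : InfSet (DSub P) :=
  ⟨fun S => ⟨⋂ U ∈ S, U.1, by
    intro x p y h1 h2 h3
    simp only [Set.mem_iInter] at h3 ⊢
    intro U hU
    exact U.2 x p y h1 h2 (h3.imp (fun h => h U hU) fun h => h U hU)⟩⟩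

noncomputable instance : CompleteLattice (DSub P) :=
  completeLatticeOfInf (DSub P) (by
    intro S
    constructor
    · intro t ht
      exact Set.biInter_subset_of_mem (t := fun U => U.1) ht
    · intro b hb
      exact Set.subset_iInter₂ fun t ht => hb ht)

end DSub


section Helpers

variable {P : Type*} [PartialOrder P]

namespace Co

theorem le_def {A B : Co P} : A ≤ B ↔ A.1 ⊆ B.1 := Iff.rfl

theorem mem_of_le {A B : Co P} (h : A ≤ B) {z : P} (hz : z ∈ A.1) : z ∈ B.1 :=
  le_def.mp h hz

theorem inf_coe (A B : Co P) : (A ⊓ B).1 = A.1 ∩ B.1 := by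
  apply Set.Subset.antisymm
  · exact Set.subset_inter (le_def.mp inf_le_left) (le_def.mp inf_le_right)
  · have : (Co.mk' (A.1 ∩ B.1) (A.2.inter B.2)) ≤ A ⊓ B :=
      le_inf (le_def.mpr Set.inter_subset_left) (le_def.mpr Set.inter_subset_right)
    exact le_def.mp this

theorem mem_inf {A B : Co P} {z : P} : z ∈ (A ⊓ B).1 ↔ z ∈ A.1 ∧ z ∈ B.1 := by
  rw [inf_coe]; rfl

/-- The convex hull of a union. -/
def hullSet (A B : Co P) : Set P :=
  {z | ∃ u ∈ A.1 ∪ B.1, ∃ v ∈ A.1 ∪ B.1, u ≤ z ∧ z ≤ v}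

theorem hullSet_ordConnected (A B : Co P) : (hullSet A B).OrdConnected := by
  constructor
  rintro x ⟨u, hu, v, hv, hux, hxv⟩ y ⟨u', hu', v', hv', h1, h2⟩ z hz
  exact ⟨u, hu, v', hv', hux.trans hz.1, hz.2.trans h2⟩

theorem sup_coe (A B : Co P) : (A ⊔ B).1 = hullSet A B := by
  apply Set.Subset.antisymm
  · have : A ⊔ B ≤ Co.mk' (hullSet A B) (hullSet_ordConnected A B) := by
      apply sup_le
      · exact le_def.mpr fun z hz => ⟨z, Or.inl hz, z, Or.inl hz, le_refl z, le_refl z⟩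
      · exact le_def.mpr fun z hz => ⟨z, Or.inr hz, z, Or.inr hz, le_refl z, le_refl z⟩
    exact le_def.mp this
  · rintro z ⟨u, hu, v, hv, huz, hzv⟩
    have hu' : u ∈ (A ⊔ B).1 := by
      rcases hu with h | h
      · exact mem_of_le le_sup_left h
      · exact mem_of_le le_sup_right h
    have hv' : v ∈ (A ⊔ B).1 := by
      rcases hv with h | h
      · exact mem_of_le le_sup_left h
      · exact mem_of_le le_sup_right h
    exact (A ⊔ B).2.out hu' hv' ⟨huz, hzv⟩

theorem mem_sup {A B : Co P} {z : P} :
    z ∈ (A ⊔ B).1 ↔ ∃ u ∈ A.1 ∪ B.1, ∃ v ∈ A.1 ∪ B.1, u ≤ z ∧ z ≤ v := by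
  rw [sup_coe]; rfl

end Co

/-- A poset of length at most `2` has no chain with four elements. -/
theorem lengthLE.no_four_chain (h : lengthLE P 2) {a b c d : P}
    (h1 : a < b) (h2 : b < c) (h3 : c < d) : False := by
  classical
  have hab : a ≤ b := h1.le
  have hbc : b ≤ c := h2.le
  have hcd : c ≤ d := h3.le
  have hac : a ≤ c := hab.trans hbc
  have hbd : b ≤ d := hbc.trans hcd
  have had : a ≤ d := hab.trans hbd
  have hchain : IsChain (· ≤ ·) (({a, b, c, d} : Finset P) : Set P) := by
    intro x hx y hy _
    simp only [Finset.coe_insert, Set.mem_insert_iff, Finset.coe_singleton,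
      Set.mem_singleton_iff] at hx hy
    rcases hx with rfl | rfl | rfl | rfl <;> rcases hy with rfl | rfl | rfl | rfl <;>
      first
        | exact Or.inl le_rfl
        | exact Or.inl hab | exact Or.inl hbc | exact Or.inl hcd
        | exact Or.inl hac | exact Or.inl hbd | exact Or.inl had
        | exact Or.inr hab | exact Or.inr hbc | exact Or.inr hcd
        | exact Or.inr hac | exact Or.inr hbd | exact Or.inr had
  have hcard : ({a, b, c, d} : Finset P).card = 4 := by
    have hab' : a ≠ b := h1.ne
    have hac' : a ≠ c := (h1.trans h2).ne
    have had' : a ≠ d := ((h1.trans h2).trans h3).ne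
    have hbc' : b ≠ c := h2.ne
    have hbd' : b ≠ d := (h2.trans h3).ne
    have hcd' : c ≠ d := h3.ne
    simp [Finset.card_insert_of_notMem, hab', hac', had', hbc', hbd', hcd']
  have := h {a, b, c, d} hchain
  omega

end Helpers


section CoIdentities

variable {P : Type*} [PartialOrder P]

theorem Co.sup_cases {A B : Co P} {z : P} (hz : z ∈ (A ⊔ B).1) (hA : z ∉ A.1) (hB : z ∉ B.1) :
    ((∃ u ∈ A.1, u ≤ z) ∧ (∃ v ∈ B.1, z ≤ v)) ∨
      ((∃ u ∈ B.1, u ≤ z) ∧ (∃ v ∈ A.1, z ≤ v)) := by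
  obtain ⟨u, hu, v, hv, huz, hzv⟩ := Co.mem_sup.mp hz
  rcases hu with hu | hu <;> rcases hv with hv | hv
  · exact absurd (A.2.out hu hv ⟨huz, hzv⟩) hA
  · exact Or.inl ⟨⟨u, hu, huz⟩, ⟨v, hv, hzv⟩⟩
  · exact Or.inr ⟨⟨u, hu, huz⟩, ⟨v, hv, hzv⟩⟩
  · exact absurd (B.2.out hu hv ⟨huz, hzv⟩) hB

section EasyDir

variable {L : Type*} [Lattice L]

theorem idU_easy (x x₀ x₁ x₂ : L) :
    (x ⊓ x₀ ⊓ (x₁ ⊔ x₂)) ⊔ (x ⊓ x₁ ⊓ (x₀ ⊔ x₂)) ⊔ (x ⊓ x₂ ⊓ (x₀ ⊔ x₁)) ≤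
      x ⊓ (x₀ ⊔ x₁) ⊓ (x₁ ⊔ x₂) ⊓ (x₀ ⊔ x₂) := by
  refine sup_le (sup_le ?_ ?_) ?_ <;>
    refine le_inf (le_inf (le_inf ?_ ?_) ?_) ?_ <;>
    first
      | exact inf_le_of_left_le inf_le_left
      | exact inf_le_right
      | exact inf_le_of_left_le (inf_le_of_right_le le_sup_left)
      | exact inf_le_of_left_le (inf_le_of_right_le le_sup_right)
      | exact inf_le_of_right_le (sup_le le_sup_left le_sup_right)

theorem idB_easy (x a₀ a₁ b₀ b₁ : L) :
    (x ⊓ a₀ ⊓ (b₀ ⊔ b₁)) ⊔ (x ⊓ a₁ ⊓ (b₀ ⊔ b₁))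
      ⊔ (x ⊓ b₀ ⊓ (a₀ ⊔ a₁)) ⊔ (x ⊓ b₁ ⊓ (a₀ ⊔ a₁))
      ⊔ (x ⊓ (a₀ ⊔ a₁) ⊓ (b₀ ⊔ b₁) ⊓ (a₀ ⊔ b₀) ⊓ (a₁ ⊔ b₁))
      ⊔ (x ⊓ (a₀ ⊔ a₁) ⊓ (b₀ ⊔ b₁) ⊓ (a₀ ⊔ b₁) ⊓ (a₁ ⊔ b₀)) ≤
      x ⊓ (a₀ ⊔ a₁) ⊓ (b₀ ⊔ b₁) := by
  refine sup_le (sup_le (sup_le (sup_le (sup_le ?_ ?_) ?_) ?_) ?_) ?_ <;>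
    refine le_inf (le_inf ?_ ?_) ?_ <;>
    first
      | exact inf_le_of_left_le inf_le_left
      | exact inf_le_right
      | exact inf_le_of_left_le (inf_le_of_right_le le_sup_left)
      | exact inf_le_of_left_le (inf_le_of_right_le le_sup_right)
      | exact inf_le_of_left_le (inf_le_of_left_le (inf_le_of_left_le inf_le_left))
      | exact inf_le_of_left_le (inf_le_of_left_le (inf_le_of_left_le inf_le_right))
      | exact inf_le_of_left_le (inf_le_of_left_le inf_le_right)

theorem idL2_easy (a b b' c c' : L) :
    (a ⊓ b ⊓ (c ⊔ c')) ⊔ (a ⊓ ((b ⊓ c) ⊔ b')) ⊔ (a ⊓ ((b ⊓ c') ⊔ b')) ≤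
      a ⊓ ((b ⊓ (c ⊔ c')) ⊔ b') := by
  refine sup_le (sup_le ?_ ?_) ?_
  · exact le_inf (inf_le_of_left_le inf_le_left)
      (le_sup_of_le_left (le_inf (inf_le_of_left_le inf_le_right) inf_le_right))
  · exact le_inf inf_le_left
      (inf_le_of_right_le (sup_le_sup_right (inf_le_inf_left b le_sup_left) b'))
  · exact le_inf inf_le_left
      (inf_le_of_right_le (sup_le_sup_right (inf_le_inf_left b le_sup_right) b'))

end EasyDir

theorem idU_Co : IdU (Co P) := by
  intro X X₀ X₁ X₂
  apply le_antisymm _ (idU_easy X X₀ X₁ X₂)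
  refine Co.le_def.mpr fun z hz => ?_
  obtain ⟨h1, h02⟩ := Co.mem_inf.mp hz
  obtain ⟨h2, h12⟩ := Co.mem_inf.mp h1
  obtain ⟨hX, h01⟩ := Co.mem_inf.mp h2
  by_cases h0 : z ∈ X₀.1
  · exact Co.mem_of_le (le_sup_of_le_left le_sup_left)
      (Co.mem_inf.mpr ⟨Co.mem_inf.mpr ⟨hX, h0⟩, h12⟩)
  by_cases h1' : z ∈ X₁.1
  · exact Co.mem_of_le (le_sup_of_le_left le_sup_right)
      (Co.mem_inf.mpr ⟨Co.mem_inf.mpr ⟨hX, h1'⟩, h02⟩)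
  by_cases h2' : z ∈ X₂.1
  · exact Co.mem_of_le le_sup_right
      (Co.mem_inf.mpr ⟨Co.mem_inf.mpr ⟨hX, h2'⟩, h01⟩)
  exfalso
  have contra : ∀ A : Co P, z ∉ A.1 → (∃ u ∈ A.1, u ≤ z) → (∃ v ∈ A.1, z ≤ v) → False := by
    rintro A hA ⟨u, hu, h1⟩ ⟨v, hv, h2⟩
    exact hA (A.2.out hu hv ⟨h1, h2⟩)
  rcases Co.sup_cases h01 h0 h1' with ⟨l01, r01⟩ | ⟨l01, r01⟩ <;>
  rcases Co.sup_cases h12 h1' h2' with ⟨l12, r12⟩ | ⟨l12, r12⟩ <;>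
  rcases Co.sup_cases h02 h0 h2' with ⟨l02, r02⟩ | ⟨l02, r02⟩ <;>
    first
      | exact contra X₀ h0 l01 r01 | exact contra X₀ h0 l01 r02
      | exact contra X₀ h0 l02 r01 | exact contra X₀ h0 l02 r02
      | exact contra X₁ h1' l01 r01 | exact contra X₁ h1' l01 r12
      | exact contra X₁ h1' l12 r01 | exact contra X₁ h1' l12 r12
      | exact contra X₂ h2' l12 r12 | exact contra X₂ h2' l12 r02
      | exact contra X₂ h2' l02 r12 | exact contra X₂ h2' l02 r02

theorem idB_Co : IdB (Co P) := by
  intro X A₀ A₁ B₀ B₁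
  apply le_antisymm _ (idB_easy X A₀ A₁ B₀ B₁)
  refine Co.le_def.mpr fun z hz => ?_
  obtain ⟨h1, hB⟩ := Co.mem_inf.mp hz
  obtain ⟨hX, hA⟩ := Co.mem_inf.mp h1
  -- paths into the sixfold join
  have p1 : X ⊓ A₀ ⊓ (B₀ ⊔ B₁) ≤ (X ⊓ A₀ ⊓ (B₀ ⊔ B₁)) ⊔ (X ⊓ A₁ ⊓ (B₀ ⊔ B₁))
      ⊔ (X ⊓ B₀ ⊓ (A₀ ⊔ A₁)) ⊔ (X ⊓ B₁ ⊓ (A₀ ⊔ A₁))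
      ⊔ (X ⊓ (A₀ ⊔ A₁) ⊓ (B₀ ⊔ B₁) ⊓ (A₀ ⊔ B₀) ⊓ (A₁ ⊔ B₁))
      ⊔ (X ⊓ (A₀ ⊔ A₁) ⊓ (B₀ ⊔ B₁) ⊓ (A₀ ⊔ B₁) ⊓ (A₁ ⊔ B₀)) :=
    le_sup_of_le_left (le_sup_of_le_left (le_sup_of_le_left
      (le_sup_of_le_left le_sup_left)))
  by_cases ha0 : z ∈ A₀.1
  · exact Co.mem_of_le p1 (Co.mem_inf.mpr ⟨Co.mem_inf.mpr ⟨hX, ha0⟩, hB⟩)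
  by_cases ha1 : z ∈ A₁.1
  · exact Co.mem_of_le
      (le_sup_of_le_left (le_sup_of_le_left (le_sup_of_le_left
        (le_sup_of_le_left le_sup_right))))
      (Co.mem_inf.mpr ⟨Co.mem_inf.mpr ⟨hX, ha1⟩, hB⟩)
  by_cases hb0 : z ∈ B₀.1
  · exact Co.mem_of_le
      (le_sup_of_le_left (le_sup_of_le_left (le_sup_of_le_left le_sup_right)))
      (Co.mem_inf.mpr ⟨Co.mem_inf.mpr ⟨hX, hb0⟩, hA⟩)
  by_cases hb1 : z ∈ B₁.1
  · exact Co.mem_of_le (le_sup_of_le_left (le_sup_of_le_left le_sup_right))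
      (Co.mem_inf.mpr ⟨Co.mem_inf.mpr ⟨hX, hb1⟩, hA⟩)
  rcases Co.sup_cases hA ha0 ha1 with ⟨⟨a, haa, haz⟩, ⟨a', haa', hza'⟩⟩ |
      ⟨⟨a, haa, haz⟩, ⟨a', haa', hza'⟩⟩ <;>
    rcases Co.sup_cases hB hb0 hb1 with ⟨⟨b, hbb, hbz⟩, ⟨b', hbb', hzb'⟩⟩ |
      ⟨⟨b, hbb, hbz⟩, ⟨b', hbb', hzb'⟩⟩
  -- case a : A₀ → A₁, b : B₀ → B₁  : sixth joinand
  · refine Co.mem_of_le le_sup_right (Co.mem_inf.mpr ⟨Co.mem_inf.mpr ⟨Co.mem_inf.mpr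
      ⟨Co.mem_inf.mpr ⟨hX, hA⟩, hB⟩, ?_⟩, ?_⟩)
    · exact Co.mem_sup.mpr ⟨a, Or.inl haa, b', Or.inr hbb', haz, hzb'⟩
    · exact Co.mem_sup.mpr ⟨b, Or.inr hbb, a', Or.inl haa', hbz, hza'⟩
  -- case a : A₀ → A₁, b : B₁ → B₀  : fifth joinand
  · refine Co.mem_of_le (le_sup_of_le_left le_sup_right)
      (Co.mem_inf.mpr ⟨Co.mem_inf.mpr ⟨Co.mem_inf.mpr
        ⟨Co.mem_inf.mpr ⟨hX, hA⟩, hB⟩, ?_⟩, ?_⟩)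
    · exact Co.mem_sup.mpr ⟨a, Or.inl haa, b', Or.inr hbb', haz, hzb'⟩
    · exact Co.mem_sup.mpr ⟨b, Or.inr hbb, a', Or.inl haa', hbz, hza'⟩
  -- case a : A₁ → A₀, b : B₀ → B₁  : fifth joinand
  · refine Co.mem_of_le (le_sup_of_le_left le_sup_right)
      (Co.mem_inf.mpr ⟨Co.mem_inf.mpr ⟨Co.mem_inf.mpr
        ⟨Co.mem_inf.mpr ⟨hX, hA⟩, hB⟩, ?_⟩, ?_⟩)
    · exact Co.mem_sup.mpr ⟨b, Or.inr hbb, a', Or.inl haa', hbz, hza'⟩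
    · exact Co.mem_sup.mpr ⟨a, Or.inl haa, b', Or.inr hbb', haz, hzb'⟩
  -- case a : A₁ → A₀, b : B₁ → B₀  : sixth joinand
  · refine Co.mem_of_le le_sup_right (Co.mem_inf.mpr ⟨Co.mem_inf.mpr ⟨Co.mem_inf.mpr
      ⟨Co.mem_inf.mpr ⟨hX, hA⟩, hB⟩, ?_⟩, ?_⟩)
    · exact Co.mem_sup.mpr ⟨b, Or.inr hbb, a', Or.inl haa', hbz, hza'⟩
    · exact Co.mem_sup.mpr ⟨a, Or.inl haa, b', Or.inr hbb', haz, hzb'⟩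

theorem idL2_Co (h : lengthLE P 2) : IdL2 (Co P) := by
  intro A B B' C C'
  apply le_antisymm _ (idL2_easy A B B' C C')
  refine Co.le_def.mpr fun z hz => ?_
  obtain ⟨hA, hs⟩ := Co.mem_inf.mp hz
  by_cases hm : z ∈ (B ⊓ (C ⊔ C')).1
  · obtain ⟨hB, hCC⟩ := Co.mem_inf.mp hm
    exact Co.mem_of_le (le_sup_of_le_left le_sup_left)
      (Co.mem_inf.mpr ⟨Co.mem_inf.mpr ⟨hA, hB⟩, hCC⟩)
  by_cases hb' : z ∈ B'.1
  · exact Co.mem_of_le (le_sup_of_le_left le_sup_right)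
      (Co.mem_inf.mpr ⟨hA, Co.mem_of_le le_sup_right hb'⟩)
  rcases Co.sup_cases hs hm hb' with ⟨⟨u, hu, huz⟩, ⟨w, hw, hzw⟩⟩ |
      ⟨⟨u, hu, huz⟩, ⟨w, hw, hzw⟩⟩
  · -- u ∈ B ⊓ (C ⊔ C') below z, w ∈ B' above z
    obtain ⟨huB, huCC⟩ := Co.mem_inf.mp hu
    have huz' : u < z := lt_of_le_of_ne huz (fun e => hm (e ▸ hu))
    have hzw' : z < w := lt_of_le_of_ne hzw (fun e => hb' (e ▸ hw))
    by_cases hc : u ∈ C.1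
    · exact Co.mem_of_le (le_sup_of_le_left le_sup_right)
        (Co.mem_inf.mpr ⟨hA, Co.mem_sup.mpr
          ⟨u, Or.inl (Co.mem_inf.mpr ⟨huB, hc⟩), w, Or.inr hw, huz, hzw⟩⟩)
    by_cases hc' : u ∈ C'.1
    · exact Co.mem_of_le le_sup_right
        (Co.mem_inf.mpr ⟨hA, Co.mem_sup.mpr
          ⟨u, Or.inl (Co.mem_inf.mpr ⟨huB, hc'⟩), w, Or.inr hw, huz, hzw⟩⟩)
    exfalso
    rcases Co.sup_cases huCC hc hc' with ⟨⟨s, hsC, hsu⟩, -⟩ | ⟨⟨s, hsC, hsu⟩, -⟩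
    · exact h.no_four_chain (lt_of_le_of_ne hsu fun e => hc (e ▸ hsC)) huz' hzw'
    · exact h.no_four_chain (lt_of_le_of_ne hsu fun e => hc' (e ▸ hsC)) huz' hzw'
  · -- u ∈ B' below z, w ∈ B ⊓ (C ⊔ C') above z
    obtain ⟨hwB, hwCC⟩ := Co.mem_inf.mp hw
    have huz' : u < z := lt_of_le_of_ne huz (fun e => hb' (e ▸ hu))
    have hzw' : z < w := lt_of_le_of_ne hzw (fun e => hm (e ▸ hw))
    by_cases hc : w ∈ C.1
    · exact Co.mem_of_le (le_sup_of_le_left le_sup_right)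
        (Co.mem_inf.mpr ⟨hA, Co.mem_sup.mpr
          ⟨u, Or.inr hu, w, Or.inl (Co.mem_inf.mpr ⟨hwB, hc⟩), huz, hzw⟩⟩)
    by_cases hc' : w ∈ C'.1
    · exact Co.mem_of_le le_sup_right
        (Co.mem_inf.mpr ⟨hA, Co.mem_sup.mpr
          ⟨u, Or.inr hu, w, Or.inl (Co.mem_inf.mpr ⟨hwB, hc'⟩), huz, hzw⟩⟩)
    exfalso
    rcases Co.sup_cases hwCC hc hc' with ⟨-, ⟨t, htC, hwt⟩⟩ | ⟨-, ⟨t, htC, hwt⟩⟩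
    · exact h.no_four_chain huz' hzw' (lt_of_le_of_ne hwt fun e => hc' (e.symm ▸ htC))
    · exact h.no_four_chain huz' hzw' (lt_of_le_of_ne hwt fun e => hc (e.symm ▸ htC))

end CoIdentities


section Backward

universe v

variable {L : Type v} [Lattice L]

/-- A (possibly empty) order filter closed under meets. -/
def SWFilt (F : Set L) : Prop :=
  (∀ ⦃x⦄, x ∈ F → ∀ ⦃y⦄, x ≤ y → y ∈ F) ∧ ∀ ⦃x⦄, x ∈ F → ∀ ⦃y⦄, y ∈ F → x ⊓ y ∈ F

/-- Join-primality of a subset. -/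
def SWPrimeSet (F : Set L) : Prop := ∀ u v : L, u ⊔ v ∈ F → u ∈ F ∨ v ∈ F

/-- The data of a middle point: a filter together with families of prime
filters below and above it. -/
structure SWMid (L : Type v) [Lattice L] : Type v where
  F : Set L
  isF : SWFilt F
  Gs : Set (Set L)
  Hs : Set (Set L)
  hG : ∀ G ∈ Gs, SWFilt G ∧ SWPrimeSet G
  hH : ∀ H ∈ Hs, SWFilt H ∧ SWPrimeSet H
  cross : ∀ G ∈ Gs, ∀ H ∈ Hs, ∀ c : L, c ∈ G → c ∈ H → c ∈ F
  split : ∀ u v : L, u ⊔ v ∈ F → u ∈ F ∨ v ∈ F ∨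
    (∃ G ∈ Gs, ∃ H ∈ Hs, u ∈ G ∧ v ∈ H) ∨ (∃ G ∈ Gs, ∃ H ∈ Hs, v ∈ G ∧ u ∈ H)

/-- Prime filters, used as minimal and maximal points. -/
def SWPrime (L : Type v) [Lattice L] : Type v := {G : Set L // SWFilt G ∧ SWPrimeSet G}

/-- The poset of points used to represent `L`. -/
def SWPt (L : Type v) [Lattice L] : Type v := SWPrime L ⊕ (SWMid L ⊕ SWPrime L)

namespace SWPt

/-- The cluster (filter of elements "containing" the point). -/
def cluster : SWPt L → Set L
  | .inl G => G.1
  | .inr (.inl m) => m.F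
  | .inr (.inr H) => H.1

theorem cluster_filt (p : SWPt L) : SWFilt p.cluster := by
  rcases p with G | m | H
  · exact G.2.1
  · exact m.isF
  · exact H.2.1

/-- The order on points. -/
def le : SWPt L → SWPt L → Prop
  | .inl G, .inl G' => G = G'
  | .inl G, .inr (.inl m) => G.1 ∈ m.Gs
  | .inl _, .inr (.inr _) => True
  | .inr (.inl m), .inr (.inl m') => m = m'
  | .inr (.inl m), .inr (.inr H) => H.1 ∈ m.Hs
  | .inr (.inr H), .inr (.inr H') => H = H'
  | _, _ => False

instance : PartialOrder (SWPt L) where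
  le := le
  le_refl x := by rcases x with G | m | H <;> simp [le]
  le_trans a b c hab hbc := by
    rcases a with G | m | H <;> rcases b with G' | m' | H' <;>
      rcases c with G'' | m'' | H'' <;>
      simp_all [le]
  le_antisymm a b hab hba := by
    rcases a with G | m | H <;> rcases b with G' | m' | H' <;> simp_all [le] <;> rfl

theorem le_def {p q : SWPt L} : p ≤ q ↔ le p q := Iff.rfl

/-- The rank of a point. -/
def rank : SWPt L → ℕ := Sum.elim (fun _ => 0) (Sum.elim (fun _ => 1) fun _ => 2)

theorem eq_of_le_of_rank_eq {p q : SWPt L} (h : p ≤ q) (hr : rank p = rank q) :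
    p = q := by
  rw [le_def] at h
  rcases p with G | m | H <;> rcases q with G' | m' | H' <;>
    simp_all [le_def, le, rank] <;> rfl

theorem length2 : lengthLE (SWPt L) 2 := by
  classical
  intro C hC
  have hinj : Set.InjOn rank (C : Set (SWPt L)) := by
    intro x hx y hy hxy
    rcases eq_or_ne x y with rfl | hne
    · rfl
    rcases hC hx hy hne with h | h
    · exact eq_of_le_of_rank_eq h hxy
    · exact (eq_of_le_of_rank_eq h hxy.symm).symm
  have h1 : C.card = (C.image rank).card := (Finset.card_image_of_injOn hinj).symm
  have h2 : C.image rank ⊆ Finset.range 3 := by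
    intro n hn
    simp only [Finset.mem_image] at hn
    obtain ⟨p, -, rfl⟩ := hn
    have : rank p ≤ 2 := by rcases p with G | m | H <;> simp [rank]
    simp only [Finset.mem_range]
    omega
  have := Finset.card_le_card h2
  simp only [Finset.card_range] at this
  omega

end SWPt

/-- The representation map. -/
def SWf (a : L) : Co (SWPt L) :=
  Co.mk' {p : SWPt L | a ∈ p.cluster} (by
    constructor
    intro x hx y hy z hz
    obtain ⟨hxz, hzy⟩ := hz
    rw [SWPt.le_def] at hxz hzy
    rcases x with G | m | H <;> rcases z with G' | m' | H' <;>
      rcases y with G'' | m'' | H''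
    all_goals
      simp only [SWPt.le_def, SWPt.le] at hxz hzy
    all_goals first
      | exact absurd hxz not_false
      | exact absurd hzy not_false
      | (subst hxz; exact hx)
      | (subst hzy; exact hy)
      | skip
    -- remaining real case : G below m' below H''
    · exact m'.cross _ hxz _ hzy a hx hy)

theorem SWf_mem {a : L} {p : SWPt L} : p ∈ (SWf a).1 ↔ a ∈ p.cluster := Iff.rfl

theorem SWf_mono {a b : L} (h : a ≤ b) : SWf a ≤ SWf (b : L) :=
  Co.le_def.mpr fun p hp => (p.cluster_filt).1 hp h

theorem SWf_inf (a b : L) : SWf (a ⊓ b) = SWf a ⊓ SWf b := by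
  apply Subtype.ext
  rw [Co.inf_coe]
  ext p
  constructor
  · intro hp
    exact ⟨(p.cluster_filt).1 hp inf_le_left, (p.cluster_filt).1 hp inf_le_right⟩
  · rintro ⟨h1, h2⟩
    exact (p.cluster_filt).2 h1 h2

theorem SWf_sup (a b : L) : SWf (a ⊔ b) = SWf a ⊔ SWf b := by
  apply le_antisymm
  · refine Co.le_def.mpr fun p hp => ?_
    rcases p with G | m | H
    · rcases G.2.2 a b hp with h | h
      · exact Co.mem_of_le le_sup_left h
      · exact Co.mem_of_le le_sup_right h
    · rcases m.split a b hp with h | h | ⟨G, hGs, H, hHs, ha, hb⟩ | ⟨G, hGs, H, hHs, hb, ha⟩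
      · exact Co.mem_of_le le_sup_left h
      · exact Co.mem_of_le le_sup_right h
      · refine Co.mem_sup.mpr ⟨Sum.inl ⟨G, m.hG G hGs⟩, Or.inl ha,
          Sum.inr (Sum.inr ⟨H, m.hH H hHs⟩), Or.inr hb, ?_, ?_⟩
        · exact hGs
        · exact hHs
      · refine Co.mem_sup.mpr ⟨Sum.inl ⟨G, m.hG G hGs⟩, Or.inr hb,
          Sum.inr (Sum.inr ⟨H, m.hH H hHs⟩), Or.inl ha, ?_, ?_⟩
        · exact hGs
        · exact hHs
    · rcases H.2.2 a b hp with h | h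
      · exact Co.mem_of_le le_sup_left h
      · exact Co.mem_of_le le_sup_right h
  · exact sup_le (SWf_mono le_sup_left) (SWf_mono le_sup_right)


section SepProof

variable {L : Type v} [Lattice L]

theorem SWFilt.up {F : Set L} (hF : SWFilt F) {x y : L} (hx : x ∈ F) (hxy : x ≤ y) :
    y ∈ F := hF.1 hx hxy

theorem SWFilt.inf {F : Set L} (hF : SWFilt F) {x y : L} (hx : x ∈ F) (hy : y ∈ F) :
    x ⊓ y ∈ F := hF.2 hx hy

/-- The filter generated by a filter `G` and an element `c`. -/
def SWgen (G : Set L) (c : L) : Set L := {x | ∃ g ∈ G, g ⊓ c ≤ x}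

theorem SWgen_filt {G : Set L} (hG : SWFilt G) (c : L) : SWFilt (SWgen G c) := by
  constructor
  · rintro x ⟨g, hg, hgc⟩ y hxy
    exact ⟨g, hg, hgc.trans hxy⟩
  · rintro x ⟨g, hg, hgc⟩ y ⟨g', hg', hg'c⟩
    exact ⟨g ⊓ g', hG.inf hg hg',
      le_inf ((inf_le_inf_right c inf_le_left).trans hgc)
        ((inf_le_inf_right c inf_le_right).trans hg'c)⟩

theorem SWgen_subset {G : Set L} (hG : SWFilt G) (c : L) : G ⊆ SWgen G c :=
  fun x hx => ⟨x, hx, inf_le_left⟩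

theorem SWgen_mem {G : Set L} (hG : G.Nonempty) (c : L) : c ∈ SWgen G c := by
  obtain ⟨g, hg⟩ := hG
  exact ⟨g, hg, inf_le_right⟩

/-- Zorn's lemma, specialized: a maximal filter containing `u` all of whose
elements satisfy the upward-closed predicate `Q`. -/
theorem SWzorn (u : L) (Q : L → Prop) (hQu : ∀ x, u ≤ x → Q x) :
    ∃ G : Set L, SWFilt G ∧ u ∈ G ∧ (∀ x ∈ G, Q x) ∧
      ∀ G' : Set L, SWFilt G' → u ∈ G' → (∀ x ∈ G', Q x) → G ⊆ G' → G' = G := by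
  set S : Set (Set L) := {G | SWFilt G ∧ u ∈ G ∧ ∀ x ∈ G, Q x} with hS
  have hbase : {x : L | u ≤ x} ∈ S := by
    refine ⟨⟨fun x hx y hxy => hx.trans hxy, fun x hx y hy => le_inf hx hy⟩,
      le_refl u, fun x hx => hQu x hx⟩
  have hch : ∀ c ⊆ S, IsChain (fun x1 x2 => x1 ⊆ x2) c → c.Nonempty →
      ∃ ub ∈ S, ∀ s ∈ c, s ⊆ ub := by
    intro c hcS hchain ⟨c₀, hc₀⟩
    refine ⟨⋃₀ c, ⟨⟨?_, ?_⟩, Set.mem_sUnion.mpr ⟨c₀, hc₀, (hcS hc₀).2.1⟩, ?_⟩,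
      fun s hs => Set.subset_sUnion_of_mem hs⟩
    · rintro x ⟨t, ht, hxt⟩ y hxy
      exact ⟨t, ht, (hcS ht).1.up hxt hxy⟩
    · rintro x ⟨t, ht, hxt⟩ y ⟨t', ht', hyt'⟩
      rcases hchain.total ht ht' with h | h
      · exact ⟨t', ht', (hcS ht').1.inf (h hxt) hyt'⟩
      · exact ⟨t, ht, (hcS ht).1.inf hxt (h hyt')⟩
    · rintro x ⟨t, ht, hxt⟩
      exact (hcS ht).2.2 x hxt
  obtain ⟨m, -, hmS, hmax⟩ := zorn_subset_nonempty S hch _ hbase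
  exact ⟨m, hmS.1, hmS.2.1, hmS.2.2,
    fun G' h1 h2 h3 hsub => Set.Subset.antisymm (hmax ⟨h1, h2, h3⟩ hsub) hsub⟩

variable {F : Set L} {b : L}

/-- Triangle lemma: based on the Udav identity. -/
theorem SWtriangle (hU : IdU L) (hF : SWFilt F) (hbF : b ∉ F)
    (star : ∀ c, c ∉ F → ∃ f ∈ F, f ⊓ c ≤ b) {x₀ x₁ x₂ : L}
    (h₀ : x₀ ∉ F) (h₁ : x₁ ∉ F) (h₂ : x₂ ∉ F)
    (e₀₁ : x₀ ⊔ x₁ ∈ F) (e₁₂ : x₁ ⊔ x₂ ∈ F) (e₀₂ : x₀ ⊔ x₂ ∈ F) : False := by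
  obtain ⟨f₀, hf₀, hb₀⟩ := star x₀ h₀
  obtain ⟨f₁, hf₁, hb₁⟩ := star x₁ h₁
  obtain ⟨f₂, hf₂, hb₂⟩ := star x₂ h₂
  set x := f₀ ⊓ f₁ ⊓ f₂ with hx
  have hxF : x ∈ F := hF.inf (hF.inf hf₀ hf₁) hf₂
  have hx0 : x ≤ f₀ := inf_le_left.trans inf_le_left
  have hx1 : x ≤ f₁ := inf_le_left.trans inf_le_right
  have hx2 : x ≤ f₂ := inf_le_right
  have hLHS : x ⊓ (x₀ ⊔ x₁) ⊓ (x₁ ⊔ x₂) ⊓ (x₀ ⊔ x₂) ∈ F :=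
    hF.inf (hF.inf (hF.inf hxF e₀₁) e₁₂) e₀₂
  have hle : x ⊓ (x₀ ⊔ x₁) ⊓ (x₁ ⊔ x₂) ⊓ (x₀ ⊔ x₂) ≤ b := by
    rw [hU x x₀ x₁ x₂]
    refine sup_le (sup_le ?_ ?_) ?_
    · exact (inf_le_left.trans (inf_le_inf_right x₀ hx0)).trans hb₀
    · exact (inf_le_left.trans (inf_le_inf_right x₁ hx1)).trans hb₁
    · exact (inf_le_left.trans (inf_le_inf_right x₂ hx2)).trans hb₂
  exact hbF (hF.up hLHS hle)

/-- Alignment lemma: based on the Bond identity. -/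
theorem SWalign (hB : IdB L) (hF : SWFilt F) (hbF : b ∉ F)
    (star : ∀ c, c ∉ F → ∃ f ∈ F, f ⊓ c ≤ b) {a₀ a₁ b₀ b₁ : L}
    (ha₀ : a₀ ∉ F) (ha₁ : a₁ ∉ F) (hb₀ : b₀ ∉ F) (hb₁ : b₁ ∉ F)
    (ea : a₀ ⊔ a₁ ∈ F) (eb : b₀ ⊔ b₁ ∈ F) :
    (a₀ ⊔ b₀ ∈ F ∧ a₁ ⊔ b₁ ∈ F) ∨ (a₀ ⊔ b₁ ∈ F ∧ a₁ ⊔ b₀ ∈ F) := by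
  by_contra hcon
  push_neg at hcon
  obtain ⟨hc₅, hc₆⟩ := hcon
  have h5 : ∃ c, c ∉ F ∧ ∀ y : L, y ⊓ (a₀ ⊔ b₀) ⊓ (a₁ ⊔ b₁) ≤ c := by
    by_cases h : a₀ ⊔ b₀ ∈ F
    · exact ⟨a₁ ⊔ b₁, hc₅ h, fun y => inf_le_right⟩
    · exact ⟨a₀ ⊔ b₀, h, fun y => inf_le_left.trans inf_le_right⟩
  have h6 : ∃ c, c ∉ F ∧ ∀ y : L, y ⊓ (a₀ ⊔ b₁) ⊓ (a₁ ⊔ b₀) ≤ c := by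
    by_cases h : a₀ ⊔ b₁ ∈ F
    · exact ⟨a₁ ⊔ b₀, hc₆ h, fun y => inf_le_right⟩
    · exact ⟨a₀ ⊔ b₁, h, fun y => inf_le_left.trans inf_le_right⟩
  obtain ⟨c₅, hc₅F, hle₅⟩ := h5
  obtain ⟨c₆, hc₆F, hle₆⟩ := h6
  obtain ⟨g₁, hg₁, hw₁⟩ := star a₀ ha₀
  obtain ⟨g₂, hg₂, hw₂⟩ := star a₁ ha₁
  obtain ⟨g₃, hg₃, hw₃⟩ := star b₀ hb₀
  obtain ⟨g₄, hg₄, hw₄⟩ := star b₁ hb₁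
  obtain ⟨g₅, hg₅, hw₅⟩ := star c₅ hc₅F
  obtain ⟨g₆, hg₆, hw₆⟩ := star c₆ hc₆F
  set x := g₁ ⊓ g₂ ⊓ g₃ ⊓ g₄ ⊓ g₅ ⊓ g₆ with hx
  have hxF : x ∈ F := hF.inf (hF.inf (hF.inf (hF.inf (hF.inf hg₁ hg₂) hg₃) hg₄) hg₅) hg₆
  have hx1 : x ≤ g₁ :=
    inf_le_left.trans (inf_le_left.trans (inf_le_left.trans
      (inf_le_left.trans inf_le_left)))
  have hx2 : x ≤ g₂ :=
    inf_le_left.trans (inf_le_left.trans (inf_le_left.trans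
      (inf_le_left.trans inf_le_right)))
  have hx3 : x ≤ g₃ := inf_le_left.trans (inf_le_left.trans (inf_le_left.trans inf_le_right))
  have hx4 : x ≤ g₄ := inf_le_left.trans (inf_le_left.trans inf_le_right)
  have hx5 : x ≤ g₅ := inf_le_left.trans inf_le_right
  have hx6 : x ≤ g₆ := inf_le_right
  have hLHS : x ⊓ (a₀ ⊔ a₁) ⊓ (b₀ ⊔ b₁) ∈ F := hF.inf (hF.inf hxF ea) eb
  have hle : x ⊓ (a₀ ⊔ a₁) ⊓ (b₀ ⊔ b₁) ≤ b := by
    rw [hB x a₀ a₁ b₀ b₁]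
    refine sup_le (sup_le (sup_le (sup_le (sup_le ?_ ?_) ?_) ?_) ?_) ?_
    · exact (inf_le_left.trans (inf_le_inf_right a₀ hx1)).trans hw₁
    · exact (inf_le_left.trans (inf_le_inf_right a₁ hx2)).trans hw₂
    · exact (inf_le_left.trans (inf_le_inf_right b₀ hx3)).trans hw₃
    · exact (inf_le_left.trans (inf_le_inf_right b₁ hx4)).trans hw₄
    · refine le_trans (le_inf ?_ (hle₅ (x ⊓ (a₀ ⊔ a₁) ⊓ (b₀ ⊔ b₁)))) hw₅
      exact inf_le_left.trans (inf_le_left.trans (inf_le_left.trans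
        (inf_le_left.trans hx5)))
    · refine le_trans (le_inf ?_ (hle₆ (x ⊓ (a₀ ⊔ a₁) ⊓ (b₀ ⊔ b₁)))) hw₆
      exact inf_le_left.trans (inf_le_left.trans (inf_le_left.trans
        (inf_le_left.trans hx6)))
  exact hbF (hF.up hLHS hle)

end SepProof


/-- Existence of prime filters on the lower side: based on the identity (L2). -/
theorem SWside (hL2 : IdL2 L) (hB : IdB L) (hF : SWFilt F) (hbF : b ∉ F)
    (star : ∀ c, c ∉ F → ∃ f ∈ F, f ⊓ c ≤ b)
    {u₀ v₀ : L} (hu₀ : u₀ ∉ F) (hv₀ : v₀ ∉ F) (huv : u₀ ⊔ v₀ ∈ F)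
    {u : L} (huF : u ∉ F) (huLo : u ⊔ v₀ ∈ F) :
    ∃ G : Set L, SWFilt G ∧ SWPrimeSet G ∧ u ∈ G ∧
      ∀ x ∈ G, x ∈ F ∨ (x ∉ F ∧ x ⊔ v₀ ∈ F) := by
  set Λ : L → Prop := fun x => x ∈ F ∨ (x ∉ F ∧ x ⊔ v₀ ∈ F) with hΛdef
  have hΛup : ∀ x y : L, Λ x → x ≤ y → Λ y := by
    intro x y hx hxy
    by_cases hyF : y ∈ F
    · exact Or.inl hyF
    rcases hx with hx | ⟨-, hx⟩
    · exact absurd (hF.up hx hxy) hyF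
    · exact Or.inr ⟨hyF, hF.up hx (sup_le_sup_right hxy v₀)⟩
  obtain ⟨G, hGf, huG, hGΛ, hGmax⟩ :=
    SWzorn u Λ (fun x hx => hΛup u x (Or.inr ⟨huF, huLo⟩) hx)
  have hGne : G.Nonempty := ⟨u, huG⟩
  -- maximality: elements outside G have a witness
  have ext : ∀ c : L, c ∉ G → ∃ g ∈ G, ¬ Λ (g ⊓ c) := by
    intro c hc
    by_contra hno
    push_neg at hno
    have : SWgen G c = G := by
      refine hGmax (SWgen G c) (SWgen_filt hGf c) (SWgen_subset hGf c huG) ?_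
        (SWgen_subset hGf c)
      rintro x ⟨g, hg, hle⟩
      exact hΛup _ x (hno g hg) hle
    exact hc (this ▸ SWgen_mem hGne c)
  refine ⟨G, hGf, ?_, huG, hGΛ⟩
  -- primality
  intro c₀ c₁ hsup
  by_contra hcon
  push_neg at hcon
  obtain ⟨hc₀, hc₁⟩ := hcon
  obtain ⟨g₀, hg₀, hng₀⟩ := ext c₀ hc₀
  obtain ⟨g₁, hg₁, hng₁⟩ := ext c₁ hc₁
  have hgG : g₀ ⊓ g₁ ⊓ u ∈ G := hGf.inf (hGf.inf hg₀ hg₁) huG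
  set g := g₀ ⊓ g₁ ⊓ u with hgdef
  have hgF : g ∉ F := fun h => huF (hF.up h inf_le_right)
  have hpq : ∀ i : Bool, ¬ Λ (g ⊓ (if i then c₁ else c₀)) := by
    intro i hΛp
    cases i
    · exact hng₀ (hΛup _ _ hΛp
        (inf_le_inf_right c₀ (inf_le_left.trans inf_le_left)))
    · exact hng₁ (hΛup _ _ hΛp
        (inf_le_inf_right c₁ (inf_le_left.trans inf_le_right)))
  have hpF : g ⊓ c₀ ∉ F := fun h => hpq false (Or.inl h)
  have hqF : g ⊓ c₁ ∉ F := fun h => hpq true (Or.inl h)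
  -- p ⊔ v₀ ∉ F and q ⊔ v₀ ∉ F
  have hpv : (g ⊓ c₀) ⊔ v₀ ∉ F := by
    intro hmem
    rcases SWalign hB hF hbF star hpF hv₀ hu₀ hv₀ hmem huv with ⟨-, h2⟩ | ⟨h1, -⟩
    · exact hv₀ (hF.up h2 (by simp))
    · exact hpq false (Or.inr ⟨hpF, h1⟩)
  have hqv : (g ⊓ c₁) ⊔ v₀ ∉ F := by
    intro hmem
    rcases SWalign hB hF hbF star hqF hv₀ hu₀ hv₀ hmem huv with ⟨-, h2⟩ | ⟨h1, -⟩
    · exact hv₀ (hF.up h2 (by simp))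
    · exact hpq true (Or.inr ⟨hqF, h1⟩)
  have hsG : g ⊓ (c₀ ⊔ c₁) ∈ G := hGf.inf hgG hsup
  have hsF : g ⊓ (c₀ ⊔ c₁) ∉ F := fun h => hgF (hF.up h inf_le_left)
  have hsv : (g ⊓ (c₀ ⊔ c₁)) ⊔ v₀ ∈ F := by
    rcases hGΛ _ hsG with h | ⟨-, h⟩
    · exact hF.up h le_sup_left
    · exact h
  obtain ⟨f₁, hf₁, hw₁⟩ := star _ hpv
  obtain ⟨f₂, hf₂, hw₂⟩ := star _ hqv
  by_cases hcase : (f₁ ⊓ f₂) ⊓ (g ⊓ (c₀ ⊔ c₁)) ∈ F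
  · exact hsF (hF.up hcase inf_le_right)
  obtain ⟨f₃, hf₃, hw₃⟩ := star _ hcase
  have haaF : (f₁ ⊓ f₂) ⊓ f₃ ∈ F := hF.inf (hF.inf hf₁ hf₂) hf₃
  have hLHS : ((f₁ ⊓ f₂) ⊓ f₃) ⊓ ((g ⊓ (c₀ ⊔ c₁)) ⊔ v₀) ∈ F := hF.inf haaF hsv
  have hle : ((f₁ ⊓ f₂) ⊓ f₃) ⊓ ((g ⊓ (c₀ ⊔ c₁)) ⊔ v₀) ≤ b := by
    rw [hL2 ((f₁ ⊓ f₂) ⊓ f₃) g v₀ c₀ c₁]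
    refine sup_le (sup_le ?_ ?_) ?_
    · refine le_trans (le_inf (inf_le_left.trans (inf_le_left.trans inf_le_right))
        (le_inf (inf_le_left.trans (inf_le_left.trans inf_le_left)) (le_inf
          (inf_le_left.trans inf_le_right) inf_le_right))) hw₃
    · exact (inf_le_inf_right _ (inf_le_left.trans inf_le_left)).trans hw₁
    · exact (inf_le_inf_right _ (inf_le_left.trans inf_le_right)).trans hw₂
  exact hbF (hF.up hLHS hle)

/-- The separation lemma: the heart of the representation theorem. -/
theorem SWseparation (hL2 : IdL2 L) (hU : IdU L) (hB : IdB L) {a b : L}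
    (h : ¬ a ≤ b) : ∃ m : SWMid L, a ∈ m.F ∧ b ∉ m.F := by
  obtain ⟨F, hFf, haF, hQ, hFmax⟩ :=
    SWzorn a (fun x => x ≠ b) (fun x hax he => h (he ▸ hax))
  have hbF : b ∉ F := fun hb => hQ b hb rfl
  have star : ∀ c, c ∉ F → ∃ f ∈ F, f ⊓ c ≤ b := by
    intro c hc
    by_contra hno
    push_neg at hno
    have : SWgen F c = F := by
      refine hFmax (SWgen F c) (SWgen_filt hFf c) (SWgen_subset hFf c haF) ?_
        (SWgen_subset hFf c)
      rintro x ⟨f, hf, hle⟩ rfl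
      exact hno f hf hle
    exact hc (this ▸ SWgen_mem ⟨a, haF⟩ c)
  by_cases hp : ∀ u v : L, u ⊔ v ∈ F → u ∈ F ∨ v ∈ F
  · refine ⟨⟨F, hFf, ∅, ∅, ?_, ?_, ?_, ?_⟩, haF, hbF⟩
    · exact fun G hG => absurd hG (Set.notMem_empty G)
    · exact fun H hH => absurd hH (Set.notMem_empty H)
    · exact fun G hG => absurd hG (Set.notMem_empty G)
    · intro u v huv
      rcases hp u v huv with h | h
      · exact Or.inl h
      · exact Or.inr (Or.inl h)
  push_neg at hp
  obtain ⟨u₀, v₀, huv, hu₀, hv₀⟩ := hp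
  have huv' : v₀ ⊔ u₀ ∈ F := by rwa [sup_comm]
  refine ⟨⟨F, hFf,
    {G | SWFilt G ∧ SWPrimeSet G ∧ ∀ x ∈ G, x ∈ F ∨ (x ∉ F ∧ x ⊔ v₀ ∈ F)},
    {H | SWFilt H ∧ SWPrimeSet H ∧ ∀ x ∈ H, x ∈ F ∨ (x ∉ F ∧ x ⊔ u₀ ∈ F)},
    fun G hG => ⟨hG.1, hG.2.1⟩, fun H hH => ⟨hH.1, hH.2.1⟩, ?_, ?_⟩, haF, hbF⟩
  · -- cross
    intro G hG H hH c hcG hcH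
    rcases hG.2.2 c hcG with hc | ⟨hcF, hcv⟩
    · exact hc
    rcases hH.2.2 c hcH with hc | ⟨-, hcu⟩
    · exact hc
    exact absurd huv
      (fun _ => SWtriangle hU hFf hbF star hcF hu₀ hv₀ hcu huv hcv)
  · -- split
    intro u v huvF
    by_cases huF : u ∈ F
    · exact Or.inl huF
    by_cases hvF : v ∈ F
    · exact Or.inr (Or.inl hvF)
    rcases SWalign hB hFf hbF star huF hvF hu₀ hv₀ huvF huv with ⟨h1, h2⟩ | ⟨h1, h2⟩
    · -- u ⊔ u₀ ∈ F, v ⊔ v₀ ∈ F : u is high, v is low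
      obtain ⟨G, hGf, hGp, hvG, hGΛ⟩ :=
        SWside hL2 hB hFf hbF star hu₀ hv₀ huv hvF h2
      obtain ⟨H, hHf, hHp, huH, hHΛ⟩ :=
        SWside hL2 hB hFf hbF star hv₀ hu₀ huv' huF h1
      exact Or.inr (Or.inr (Or.inr ⟨G, ⟨hGf, hGp, hGΛ⟩, H, ⟨hHf, hHp, hHΛ⟩, hvG, huH⟩))
    · -- u ⊔ v₀ ∈ F, v ⊔ u₀ ∈ F : u is low, v is high
      obtain ⟨G, hGf, hGp, huG, hGΛ⟩ :=
        SWside hL2 hB hFf hbF star hu₀ hv₀ huv huF h1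
      obtain ⟨H, hHf, hHp, hvH, hHΛ⟩ :=
        SWside hL2 hB hFf hbF star hv₀ hu₀ huv' hvF h2
      exact Or.inr (Or.inr (Or.inl ⟨G, ⟨hGf, hGp, hGΛ⟩, H, ⟨hHf, hHp, hHΛ⟩, huG, hvH⟩))

end Backward

theorem stmt1.{u} (L : Type u) [Lattice L] :
    (∃ (P : Type u) (_ : PartialOrder P), lengthLE P 2 ∧
        ∃ f : LatticeHom L (Co P), Function.Injective f) ↔
      (IdL2 L ∧ IdU L ∧ IdB L) := by
  constructor
  · rintro ⟨P, hPO, hlen, f, hf⟩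
    refine ⟨?_, ?_, ?_⟩
    · intro a b b' c c'
      apply hf
      simp only [map_inf, map_sup]
      exact @idL2_Co P hPO hlen (f a) (f b) (f b') (f c) (f c')
    · intro x x₀ x₁ x₂
      apply hf
      simp only [map_inf, map_sup]
      exact @idU_Co P hPO (f x) (f x₀) (f x₁) (f x₂)
    · intro x a₀ a₁ b₀ b₁
      apply hf
      simp only [map_inf, map_sup]
      exact @idB_Co P hPO (f x) (f a₀) (f a₁) (f b₀) (f b₁)
  · rintro ⟨hL2, hU, hB⟩
    refine ⟨SWPt L, inferInstance, SWPt.length2, ⟨⟨⟨SWf, ?_⟩, ?_⟩, ?_⟩⟩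
    · exact SWf_sup
    · exact SWf_inf
    · -- injectivity
      intro x y hxy
      simp only [LatticeHom.coe_mk, SupHom.coe_mk] at hxy
      by_contra hne
      have : ¬ x ≤ y ∨ ¬ y ≤ x := by
        by_contra hc
        push_neg at hc
        exact hne (le_antisymm hc.1 hc.2)
      rcases this with hxy' | hxy'
      · obtain ⟨m, hm1, hm2⟩ := SWseparation hL2 hU hB hxy'
        have : (Sum.inr (Sum.inl m) : SWPt L) ∈ (SWf x).1 := hm1
        rw [hxy] at this
        exact hm2 this
      · obtain ⟨m, hm1, hm2⟩ := SWseparation hL2 hU hB hxy'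
        have : (Sum.inr (Sum.inl m) : SWPt L) ∈ (SWf y).1 := hm1
        rw [← hxy] at this
        exact hm2 this
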